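/- For fixed real numbers p, q with 0 < p ≤ q < 1, the function n ↦ ((n − p)/(n − q))^(n − p) (real power) is antitone (non-increasing) on the interval [1, ∞). -/

import Mathlib

/-- For fixed real `p, q` with `0 < p ≤ q < 1`, the function
`n ↦ ((n − p)/(n − q))^(n − p)` (real power) is antitone on `[1, ∞)`. -/
theorem antitoneOn_rpow_ratio (p q : ℝ) (hp : 0 < p) (hpq : p ≤ q) (hq : q < 1) :
    AntitoneOn (fun n : ℝ => ((n - p) / (n - q)) ^ (n - p)) (Set.Ici 1) := by
  have hB : ∀ x : ℝ, x ∈ Set.Ici (1:ℝ) → 0 < x - q := fun x hx => by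
    simp only [Set.mem_Ici] at hx; linarith
  have hA : ∀ x : ℝ, x ∈ Set.Ici (1:ℝ) → 0 < x - p := fun x hx => by
    have := hB x hx; linarith
  set g : ℝ → ℝ := fun n => (n - p) * (Real.log (n - p) - Real.log (n - q)) with hg
  have hderiv : ∀ x ∈ Set.Ici (1:ℝ), HasDerivAt g
      ((Real.log (x - p) - Real.log (x - q)) + (x - p) * (1/(x-p) - 1/(x-q))) x := by
    intro x hx
    have hxp := hA x hx
    have hxq := hB x hx
    have h1 : HasDerivAt (fun n : ℝ => n - p) 1 x := (hasDerivAt_id x).sub_const p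
    have h2 : HasDerivAt (fun n : ℝ => n - q) 1 x := (hasDerivAt_id x).sub_const q
    have hlp : HasDerivAt (fun n : ℝ => Real.log (n - p)) (1/(x-p)) x := by
      simpa using h1.log hxp.ne'
    have hlq : HasDerivAt (fun n : ℝ => Real.log (n - q)) (1/(x-q)) x := by
      simpa using h2.log hxq.ne'
    have := h1.mul (hlp.sub hlq)
    simpa [one_mul, hg, Pi.mul_def, Pi.sub_def] using this
  have hanti : AntitoneOn g (Set.Ici 1) := by
    apply antitoneOn_of_deriv_nonpos (convex_Ici 1)
    · intro x hx
      exact (hderiv x hx).continuousAt.continuousWithinAt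
    · intro x hx
      rw [interior_Ici] at hx
      exact ((hderiv x (Set.mem_Ici.mpr (le_of_lt (Set.mem_Ioi.mp hx)))).differentiableAt).differentiableWithinAt
    · intro x hx
      rw [interior_Ici] at hx
      have hx' : x ∈ Set.Ici (1:ℝ) := Set.mem_Ici.mpr (le_of_lt (Set.mem_Ioi.mp hx))
      rw [(hderiv x hx').deriv]
      have hxp := hA x hx'
      have hxq := hB x hx'
      have hlog : Real.log (x - p) - Real.log (x - q) ≤ (x-p)/(x-q) - 1 := by
        rw [← Real.log_div hxp.ne' hxq.ne']
        exact Real.log_le_sub_one_of_pos (div_pos hxp hxq)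
      have heq : (x - p) * (1/(x-p) - 1/(x-q)) = 1 - (x-p)/(x-q) := by
        field_simp
      rw [heq]
      linarith
  intro a ha b hb hab
  have key : ∀ x ∈ Set.Ici (1:ℝ),
      ((x - p) / (x - q)) ^ (x - p) = Real.exp (g x) := by
    intro x hx
    rw [Real.rpow_def_of_pos (div_pos (hA x hx) (hB x hx)),
      Real.log_div (hA x hx).ne' (hB x hx).ne', hg]
    ring_nf
  simp only [key a ha, key b hb]
  exact Real.exp_le_exp.mpr (hanti ha hb hab)
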